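/- For every valid substitution Γ ⊢ σ : Δ in CaTT and every X ∈ U(Γ): (i) the preimage σ⁻¹X ⊆ Var(Δ) is up-closed; (ii) depth_{σ⁻¹X}(t) ≤ depth_X(t[σ]) for every term Δ ⊢ t : A; (iii) depth_{σ⁻¹X}(τ) ≤ depth_X(τ ∘ σ) for every substitution Δ ⊢ τ : Θ; (iv) depth_{σ⁻¹X}(Δ) ≤ depth_X(σ). -/

import Mathlib

namespace Catt

mutual
inductive Ty : Type where
  | obj : Ty
  | arr : Ty → Tm → Tm → Ty
inductive Tm : Type where
  | var : ℕ → Tm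
  | coh : List (ℕ × Ty) → Ty → List (ℕ × Tm) → Tm
end

abbrev Ctx := List (ℕ × Ty)
abbrev Sub := List (ℕ × Tm)

def lookupSub (γ : Sub) (x : ℕ) : Tm :=
  match γ with
  | [] => .var x
  | (y, t) :: γ' => if x = y then t else lookupSub γ' x

mutual
def Ty.subst : Ty → Sub → Ty
  | .obj, _ => .obj
  | .arr A u v, γ => .arr (A.subst γ) (u.subst γ) (v.subst γ)
def Tm.subst : Tm → Sub → Tm
  | .var x, γ => lookupSub γ x
  | .coh Δ A δ, γ => .coh Δ A (Sub.comp δ γ)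
def Sub.comp : Sub → Sub → Sub
  | [], _ => []
  | (x, t) :: δ, γ => (x, Tm.subst t γ) :: Sub.comp δ γ
end

mutual
def Tm.vars : Tm → Finset ℕ
  | .var x => {x}
  | .coh _ _ γ => Sub.vars γ
def Sub.vars : Sub → Finset ℕ
  | [] => ∅
  | (_, t) :: γ => Tm.vars t ∪ Sub.vars γ
end

def Ty.vars : Ty → Finset ℕ
  | .obj => ∅
  | .arr A u v => A.vars ∪ u.vars ∪ v.vars

def ctxVars : Ctx → Finset ℕ
  | [] => ∅
  | (x, _) :: Γ => insert x (ctxVars Γ)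

/-- Dimension of a type (`dim ⋆ = -1`). -/
def Ty.dim : Ty → ℤ
  | .obj => -1
  | .arr A _ _ => A.dim + 1

/-- Dimension of a context. -/
def ctxDim : Ctx → ℤ
  | [] => -1
  | (_, A) :: Γ => max (A.dim + 1) (ctxDim Γ)

/-- Type of a variable in a context (most recent binding). -/
def lookupTy : Ctx → ℕ → Ty
  | [], _ => .obj
  | (y, A) :: Γ, x => if x = y then A else lookupTy Γ x

/-- Dimension of a variable of a context. -/
def varDim (Γ : Ctx) (x : ℕ) : ℤ := (lookupTy Γ x).dim + 1

/-- Max of a finite set of integers, with `max ∅ = -1`. -/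
def fmax (s : Finset ℤ) : ℤ := WithBot.unbotD (-1) s.max

/-- Depth of a term `Γ ⊢ t : A` with respect to a set `X` of variables. -/
def depthTm (Γ : Ctx) (X : Finset ℕ) (t : Tm) (A : Ty) : ℤ :=
  fmax (((Tm.vars t ∪ Ty.vars A) ∩ X).image (fun x => (A.dim + 1) - varDim Γ x))

/-- Depth of a type with respect to a set `X` of variables. -/
def depthTy (Γ : Ctx) (X : Finset ℕ) (A : Ty) : ℤ :=
  fmax ((Ty.vars A ∩ X).image (fun x => A.dim - varDim Γ x))

/-- Depth of a substitution `Γ ⊢ σ : Δ` with respect to `X ⊆ Var Γ`. -/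
def depthSub (Γ : Ctx) (X : Finset ℕ) (σ : Sub) (Δ : Ctx) : ℤ :=
  fmax ((ctxVars Δ).image
    (fun x => depthTm Γ X (Tm.subst (.var x) σ) (Ty.subst (lookupTy Δ x) σ)))

/-- Identity substitution of a context. -/
def idSub : Ctx → Sub
  | [] => []
  | (x, _) :: Γ => (x, .var x) :: idSub Γ

/-- Depth of a context with respect to `X`. -/
def depthCtx (Γ : Ctx) (X : Finset ℕ) : ℤ := depthSub Γ X (idSub Γ) Γ

/-- `X` is an up-closed set of variables of `Γ`. -/
def upClosed (Γ : Ctx) (X : Finset ℕ) : Prop :=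
  (∀ x ∈ X, x ∈ ctxVars Γ) ∧
    ∀ y A, (y, A) ∈ Γ → ∀ x ∈ X, x ∈ Ty.vars A → y ∈ X

/-- Preimage `γ⁻¹ X` of a set of variables under a substitution into `Δ`. -/
def preimage (γ : Sub) (Δ : Ctx) (X : Finset ℕ) : Finset ℕ :=
  (ctxVars Δ).filter (fun x => ((Tm.vars (Tm.subst (.var x) γ)) ∩ X).Nonempty)

/-- The pasting-context judgement `Γ ⊢ps t : A`. -/
inductive Ps : Ctx → Tm → Ty → Prop where
  | base (x : ℕ) : Ps [(x, .obj)] (.var x) .obj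
  | ext {Γ : Ctx} {x : ℕ} {A : Ty} (y f : ℕ) :
      Ps Γ (.var x) A → y ∉ ctxVars Γ → f ∉ ctxVars Γ → y ≠ f →
      Ps ((f, .arr A (.var x) (.var y)) :: (y, A) :: Γ) (.var f)
        (.arr A (.var x) (.var y))
  | down {Γ : Ctx} {f : ℕ} {A : Ty} {u v : Tm} :
      Ps Γ (.var f) (.arr A u v) → Ps Γ v A

/-- `Γ` is a pasting context. -/
def PsCtx (Γ : Ctx) : Prop := ∃ x, Ps Γ (.var x) .obj

/-- The `i`-dimensional boundary of a pasting context
(`ε = false` for the source, `ε = true` for the target). -/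
def bdry (ε : Bool) (i : ℤ) : Ctx → Ctx
  | [] => []
  | [p] => [p]
  | (f, Af) :: (y, Ay) :: Γ =>
    if ε then
      (if Ay.dim > i - 1 then bdry ε i Γ
       else if Ay.dim = i - 1 then (y, Ay) :: (bdry ε i Γ).drop 1
       else (f, Af) :: (y, Ay) :: bdry ε i Γ)
    else
      (if Ay.dim ≥ i - 1 then bdry ε i Γ
       else (f, Af) :: (y, Ay) :: bdry ε i Γ)

/-- Codimension-1 source boundary `∂⁻Γ`. -/
def srcCtx (Γ : Ctx) : Ctx := bdry false (ctxDim Γ - 1) Γ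

/-- Codimension-1 target boundary `∂⁺Γ`. -/
def tgtCtx (Γ : Ctx) : Ctx := bdry true (ctxDim Γ - 1) Γ

/-- Fullness of a type over a pasting context: side conditions (comp) or (inv). -/
def isFull (Γ : Ctx) (A : Ty) : Prop :=
  ∃ B u v, A = .arr B u v ∧
    ((ctxVars (srcCtx Γ) = Tm.vars u ∪ Ty.vars B ∧
      ctxVars (tgtCtx Γ) = Tm.vars v ∪ Ty.vars B) ∨
     (ctxVars Γ = Tm.vars u ∪ Ty.vars B ∧
      ctxVars Γ = Tm.vars v ∪ Ty.vars B))

mutual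
/-- Well-formedness of contexts. -/
inductive CtxWf : Ctx → Prop where
  | nil : CtxWf []
  | cons {Γ : Ctx} {A : Ty} {x : ℕ} :
      CtxWf Γ → TyWf Γ A → x ∉ ctxVars Γ → CtxWf ((x, A) :: Γ)
/-- Well-formedness of types. -/
inductive TyWf : Ctx → Ty → Prop where
  | obj {Γ : Ctx} : CtxWf Γ → TyWf Γ .obj
  | arr {Γ : Ctx} {A : Ty} {u v : Tm} :
      TmWf Γ u A → TmWf Γ v A → TyWf Γ (.arr A u v)
/-- Typing of terms. -/
inductive TmWf : Ctx → Tm → Ty → Prop where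
  | var {Γ : Ctx} {x : ℕ} {A : Ty} : CtxWf Γ → (x, A) ∈ Γ → TmWf Γ (.var x) A
  | coh {Γ Δ : Ctx} {A : Ty} {γ : Sub} :
      PsCtx Δ → TyWf Δ A → isFull Δ A → SubWf Γ γ Δ →
      TmWf Γ (.coh Δ A γ) (Ty.subst A γ)
/-- Typing of substitutions. -/
inductive SubWf : Ctx → Sub → Ctx → Prop where
  | nil {Γ : Ctx} : CtxWf Γ → SubWf Γ [] []
  | cons {Γ : Ctx} {γ : Sub} {Δ : Ctx} {x : ℕ} {A : Ty} {t : Tm} :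
      SubWf Γ γ Δ → TyWf Δ A → x ∉ ctxVars Δ →
      TmWf Γ t (Ty.subst A γ) → SubWf Γ ((x, t) :: γ) ((x, A) :: Δ)
end

/-- North pole variable for suspension. -/
def vN : ℕ := 2000000000
/-- South pole variable for suspension. -/
def vS : ℕ := 2000000001

mutual
/-- Suspension of a type. -/
def Ty.susp : Ty → Ty
  | .obj => .arr .obj (.var vN) (.var vS)
  | .arr A u v => .arr (A.susp) (u.susp) (v.susp)
/-- Suspension of a term. -/
def Tm.susp : Tm → Tm
  | .var x => .var x
  | .coh Δ A γ => .coh (suspCtx Δ) (A.susp) (suspSub γ)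
/-- Suspension of a context. -/
def suspCtx : List (ℕ × Ty) → List (ℕ × Ty)
  | [] => [(vS, .obj), (vN, .obj)]
  | (x, A) :: Γ => (x, A.susp) :: suspCtx Γ
/-- Suspension of a substitution. -/
def suspSub : List (ℕ × Tm) → List (ℕ × Tm)
  | [] => [(vS, .var vS), (vN, .var vN)]
  | (x, t) :: γ => (x, t.susp) :: suspSub γ
end




/-- The data of the naturality construction of Benjamin–Markakis–Offord–Sarti–Vicary,
packaged with its defining recursive clauses (Section 3.2 of the paper).
`vminus x`, `vplus x`, `vtilde x` are the fresh variables `x⁻`, `x⁺`, `x̃`;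
`star n a b` is the binary composite `a ∗ₙ b` of two `(n+1)`-cells along their
`n`-dimensional boundary; `ctxUpPM Γ X = Γ ↑± X`; `ctxUp Γ X = Γ ↑ X`;
`injm`/`injp` are the substitutions `inj∓`; `tyUpFresh Γ A x X = A ↑ˣ X`;
`tyUpTm Γ A t X = A ↑ᵗ X`; `tmUp Γ t X = t ↑ X`; `subUp Γ γ X = γ ↑ X`;
`cohUp Γ A X = coh_{Γ,A} ↑ X`; `opCtx`/`opTy`/`opTm` are the opposite
meta-operations. -/
structure NatConstr where
  vminus : ℕ → ℕ
  vplus : ℕ → ℕ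
  vtilde : ℕ → ℕ
  star : ℤ → Tm → Tm → Tm
  ctxUpPM : Ctx → Finset ℕ → Ctx
  ctxUp : Ctx → Finset ℕ → Ctx
  injm : Ctx → Finset ℕ → Sub
  injp : Ctx → Finset ℕ → Sub
  tyUpFresh : Ctx → Ty → ℕ → Finset ℕ → Ty
  tyUpTm : Ctx → Ty → Tm → Finset ℕ → Ty
  tmUp : Ctx → Tm → Finset ℕ → Tm
  subUp : Ctx → Sub → Finset ℕ → Sub
  cohUp : Ctx → Ty → Finset ℕ → Tm
  opCtx : Finset ℤ → Ctx → Ctx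
  opTy : Finset ℤ → Ty → Ty
  opTm : Finset ℤ → Tm → Tm
  /- Defining clauses: naturality of contexts. -/
  ctxUpPM_nil : ctxUpPM [] ∅ = []
  ctxUp_nil : ctxUp [] ∅ = []
  injm_nil : injm [] ∅ = []
  injp_nil : injp [] ∅ = []
  ctxUpPM_cons_not_mem : ∀ (Γ : Ctx) (x : ℕ) (A : Ty) (X : Finset ℕ), x ∉ X →
    ctxUpPM ((x, A) :: Γ) X = (x, A) :: ctxUp Γ X
  ctxUp_cons_not_mem : ∀ (Γ : Ctx) (x : ℕ) (A : Ty) (X : Finset ℕ), x ∉ X →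
    ctxUp ((x, A) :: Γ) X = (x, A) :: ctxUp Γ X
  injm_cons_not_mem : ∀ (Γ : Ctx) (x : ℕ) (A : Ty) (X : Finset ℕ), x ∉ X →
    injm ((x, A) :: Γ) X = (x, .var x) :: injm Γ X
  injp_cons_not_mem : ∀ (Γ : Ctx) (x : ℕ) (A : Ty) (X : Finset ℕ), x ∉ X →
    injp ((x, A) :: Γ) X = (x, .var x) :: injp Γ X
  ctxUpPM_cons_mem : ∀ (Γ : Ctx) (x : ℕ) (A : Ty) (X : Finset ℕ), x ∈ X →
    ctxUpPM ((x, A) :: Γ) X =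
      (vplus x, Ty.subst A (injp Γ (X.erase x))) ::
      (vminus x, Ty.subst A (injm Γ (X.erase x))) :: ctxUp Γ (X.erase x)
  ctxUp_cons_mem : ∀ (Γ : Ctx) (x : ℕ) (A : Ty) (X : Finset ℕ), x ∈ X →
    ctxUp ((x, A) :: Γ) X =
      (vtilde x, tyUpFresh Γ A x (X.erase x)) :: ctxUpPM ((x, A) :: Γ) X
  injm_cons_mem : ∀ (Γ : Ctx) (x : ℕ) (A : Ty) (X : Finset ℕ), x ∈ X →
    injm ((x, A) :: Γ) X = (x, .var (vminus x)) :: injm Γ (X.erase x)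
  injp_cons_mem : ∀ (Γ : Ctx) (x : ℕ) (A : Ty) (X : Finset ℕ), x ∈ X →
    injp ((x, A) :: Γ) X = (x, .var (vplus x)) :: injp Γ (X.erase x)
  /- Defining clauses: naturality of types at a fresh variable. -/
  tyUpFresh_obj : ∀ (Γ : Ctx) (x : ℕ) (X : Finset ℕ),
    tyUpFresh Γ .obj x X = .arr .obj (.var (vminus x)) (.var (vplus x))
  tyUpFresh_arr : ∀ (Γ : Ctx) (A : Ty) (u v : Tm) (x : ℕ) (X : Finset ℕ),
    tyUpFresh Γ (.arr A u v) x X =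
      .arr (.arr A (Tm.subst u (injm Γ X)) (Tm.subst v (injp Γ X)))
        (if Tm.vars v ∩ X = ∅ then .var (vminus x)
         else star (A.dim + 1) (.var (vminus x)) (tmUp Γ v X))
        (if Tm.vars u ∩ X = ∅ then .var (vplus x)
         else star (A.dim + 1) (tmUp Γ u X) (.var (vplus x)))
  /- Defining clauses: naturality of types at an arbitrary term. -/
  tyUpTm_obj : ∀ (Γ : Ctx) (t : Tm) (X : Finset ℕ),
    tyUpTm Γ .obj t X = .arr .obj (Tm.subst t (injm Γ X)) (Tm.subst t (injp Γ X))
  tyUpTm_arr : ∀ (Γ : Ctx) (A : Ty) (u v : Tm) (t : Tm) (X : Finset ℕ),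
    tyUpTm Γ (.arr A u v) t X =
      .arr (.arr A (Tm.subst u (injm Γ X)) (Tm.subst v (injp Γ X)))
        (if Tm.vars v ∩ X = ∅ then Tm.subst t (injm Γ X)
         else star (A.dim + 1) (Tm.subst t (injm Γ X)) (tmUp Γ v X))
        (if Tm.vars u ∩ X = ∅ then Tm.subst t (injp Γ X)
         else star (A.dim + 1) (tmUp Γ u X) (Tm.subst t (injp Γ X)))
  /- Defining clauses: naturality of terms. -/
  tmUp_var : ∀ (Γ : Ctx) (x : ℕ) (X : Finset ℕ),
    tmUp Γ (.var x) X = .var (vtilde x)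
  tmUp_coh : ∀ (Γ Δ : Ctx) (A : Ty) (γ : Sub) (X : Finset ℕ),
    tmUp Γ (.coh Δ A γ) X = Tm.subst (cohUp Δ A (preimage γ Δ X)) (subUp Γ γ X)
  /- Defining clauses: naturality of substitutions. -/
  subUp_nil : ∀ (Γ : Ctx) (X : Finset ℕ), subUp Γ [] X = []
  subUp_cons_empty : ∀ (Γ : Ctx) (γ : Sub) (x : ℕ) (t : Tm) (X : Finset ℕ),
    Tm.vars t ∩ X = ∅ →
    subUp Γ ((x, t) :: γ) X = (x, t) :: subUp Γ γ X
  subUp_cons_nonempty : ∀ (Γ : Ctx) (γ : Sub) (x : ℕ) (t : Tm) (X : Finset ℕ),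
    Tm.vars t ∩ X ≠ ∅ →
    subUp Γ ((x, t) :: γ) X =
      (vtilde x, tmUp Γ t X) :: (vplus x, Tm.subst t (injp Γ X)) ::
      (vminus x, Tm.subst t (injm Γ X)) :: subUp Γ γ X
  /- Defining clause: naturality of coherences at depth 0. -/
  cohUp_depth0 : ∀ (Γ : Ctx) (A : Ty) (X : Finset ℕ), depthCtx Γ X = 0 →
    cohUp Γ A X =
      .coh (ctxUp Γ X) (tyUpTm Γ A (.coh Γ A (idSub Γ)) X) (idSub (ctxUp Γ X))
  /- The binary composite `∗` has its expected typing. -/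
  star_wf : ∀ (Γ : Ctx) (B : Ty) (u v w a b : Tm),
    TmWf Γ a (.arr B u v) → TmWf Γ b (.arr B v w) →
    TmWf Γ (star (B.dim + 1) a b) (.arr B u w)
  /- Clauses and admissibility of the opposite meta-operations. -/
  opCtx_nil : ∀ M, opCtx M [] = []
  opCtx_cons : ∀ (M : Finset ℤ) (Γ : Ctx) (x : ℕ) (A : Ty),
    opCtx M ((x, A) :: Γ) = (x, opTy M A) :: opCtx M Γ
  opTy_obj : ∀ M, opTy M .obj = .obj
  opTm_var : ∀ (M : Finset ℤ) (x : ℕ), opTm M (.var x) = .var x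
  opCtx_wf : ∀ (M : Finset ℤ) (Γ : Ctx), CtxWf Γ → CtxWf (opCtx M Γ)
  opTm_wf : ∀ (M : Finset ℤ) (Γ : Ctx) (t : Tm) (A : Ty),
    TmWf Γ t A → TmWf (opCtx M Γ) (opTm M t) (opTy M A)




/-! ### Auxiliary lemmas -/

theorem Ty.dim_ge (A : Ty) : -1 ≤ A.dim := by
  cases A with
  | obj => simp [Ty.dim]
  | arr B u v => have := Ty.dim_ge B; simp [Ty.dim]; omega

theorem Ty.dim_subst : ∀ (A : Ty) (γ : Sub), (A.subst γ).dim = A.dim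
  | .obj, _ => rfl
  | .arr A u v, γ => by simp [Ty.subst, Ty.dim, Ty.dim_subst A γ]

mutual
theorem ctxWf_of_tyWf : ∀ {Γ A}, TyWf Γ A → CtxWf Γ
  | _, _, .obj h => h
  | _, _, .arr h _ => ctxWf_of_tmWf h
theorem ctxWf_of_tmWf : ∀ {Γ t A}, TmWf Γ t A → CtxWf Γ
  | _, _, _, .var h _ => h
  | _, _, _, .coh _ _ _ h => (ctxWf_of_subWf h).1
theorem ctxWf_of_subWf : ∀ {Γ γ Δ}, SubWf Γ γ Δ → CtxWf Γ ∧ CtxWf Δ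
  | _, _, _, .nil h => ⟨h, .nil⟩
  | _, _, _, .cons h hA hx _ =>
      ⟨(ctxWf_of_subWf h).1, .cons (ctxWf_of_subWf h).2 hA hx⟩
end

theorem mem_ctxVars_of_mem {Γ : Ctx} {x A} (h : (x, A) ∈ Γ) : x ∈ ctxVars Γ := by
  induction Γ with
  | nil => simp at h
  | cons p Γ ih =>
    obtain ⟨y, B⟩ := p
    rcases List.mem_cons.mp h with h | h
    · simp [ctxVars, (Prod.mk.injEq .. ▸ h : _ ∧ _).1]
    · simp [ctxVars, ih h]

theorem lookupTy_mem {Γ : Ctx} {x} (h : x ∈ ctxVars Γ) : (x, lookupTy Γ x) ∈ Γ := by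
  induction Γ with
  | nil => simp [ctxVars] at h
  | cons p Γ ih =>
    obtain ⟨y, B⟩ := p
    simp [ctxVars] at h
    by_cases hxy : x = y
    · subst hxy; simp [lookupTy]
    · simp only [lookupTy, if_neg hxy]
      exact List.mem_cons_of_mem _ (ih (h.resolve_left hxy))

theorem varDim_le_ctxDim {Γ : Ctx} {x A} (h : (x, A) ∈ Γ) : A.dim + 1 ≤ ctxDim Γ := by
  induction Γ with
  | nil => simp at h
  | cons p Γ ih =>
    obtain ⟨y, B⟩ := p
    rcases List.mem_cons.mp h with h | h
    · have : A = B := (Prod.mk.injEq .. ▸ h : _ ∧ _).2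
      subst this; simp [ctxDim]
    · have := ih h; simp [ctxDim]; omega

theorem ctxDim_nonneg {Γ : Ctx} (h : Γ ≠ []) : 0 ≤ ctxDim Γ := by
  match Γ with
  | (x, A) :: Γ => have := A.dim_ge; simp [ctxDim]; omega

theorem ctxDim_attained {Γ : Ctx} (h : Γ ≠ []) : ∃ x A, (x, A) ∈ Γ ∧ A.dim + 1 = ctxDim Γ := by
  induction Γ with
  | nil => simp at h
  | cons p Γ ih =>
    obtain ⟨y, B⟩ := p
    rcases Γ with _ | ⟨q, Γ'⟩
    · exact ⟨y, B, by simp, by have := B.dim_ge; simp [ctxDim]; omega⟩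
    · obtain ⟨x, A, hm, hd⟩ := ih (by simp)
      by_cases hc : ctxDim (q :: Γ') ≤ B.dim + 1
      · refine ⟨y, B, by simp, ?_⟩
        rw [show ctxDim ((y, B) :: q :: Γ') = max (B.dim + 1) (ctxDim (q :: Γ')) from rfl]
        omega
      · refine ⟨x, A, by simp [hm], ?_⟩
        rw [show ctxDim ((y, B) :: q :: Γ') = max (B.dim + 1) (ctxDim (q :: Γ')) from rfl]
        omega

/-! ### fmax -/

theorem le_fmax {s : Finset ℤ} {b : ℤ} (hb : b ∈ s) : b ≤ fmax s := by
  unfold fmax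
  have := Finset.le_max hb
  cases hm : s.max with
  | bot => rw [hm] at this; exact absurd this (by simp)
  | coe m => rw [hm] at this; simpa using this

theorem neg_one_le_fmax_empty : fmax (∅ : Finset ℤ) = -1 := by simp [fmax]

theorem fmax_le_fmax {s t : Finset ℤ} (h1 : ∀ a ∈ s, ∃ b ∈ t, a ≤ b)
    (h2 : t.Nonempty → s.Nonempty) : fmax s ≤ fmax t := by
  rcases s.eq_empty_or_nonempty with hs | hs
  · subst hs
    rcases t.eq_empty_or_nonempty with ht | ht
    · simp [ht]
    · exact absurd (h2 ht) (by simp)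
  · obtain ⟨m, hm⟩ := s.max_of_nonempty hs
    have hmem : m ∈ s := Finset.mem_of_max hm
    obtain ⟨b, hb, hab⟩ := h1 m hmem
    have : fmax s = m := by simp [fmax, hm]
    rw [this]
    exact le_trans hab (le_fmax hb)

theorem fmax_image_mono {s : Finset ℕ} {f g : ℕ → ℤ} (h : ∀ x ∈ s, f x ≤ g x) :
    fmax (s.image f) ≤ fmax (s.image g) := by
  apply fmax_le_fmax
  · intro a ha
    obtain ⟨x, hx, rfl⟩ := Finset.mem_image.mp ha
    exact ⟨g x, Finset.mem_image_of_mem g hx, h x hx⟩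
  · intro ⟨b, hb⟩
    obtain ⟨x, hx, rfl⟩ := Finset.mem_image.mp hb
    exact ⟨f x, Finset.mem_image_of_mem f hx⟩

/-! ### Identity substitution -/

theorem lookupSub_idSub (Γ : Ctx) (x : ℕ) : lookupSub (idSub Γ) x = .var x := by
  induction Γ with
  | nil => rfl
  | cons p Γ ih =>
    obtain ⟨y, A⟩ := p
    by_cases hxy : x = y
    · subst hxy; simp [idSub, lookupSub]
    · simp [idSub, lookupSub, hxy, ih]

mutual
theorem Tm.subst_idSub : ∀ (t : Tm) (Γ : Ctx), t.subst (idSub Γ) = t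
  | .var x, Γ => by simp [Tm.subst, lookupSub_idSub]
  | .coh Θ A δ, Γ => by rw [Tm.subst, Sub.comp_idSub δ Γ]
theorem Sub.comp_idSub : ∀ (δ : Sub) (Γ : Ctx), Sub.comp δ (idSub Γ) = δ
  | [], Γ => rfl
  | (x, t) :: δ, Γ => by rw [Sub.comp, Tm.subst_idSub t Γ, Sub.comp_idSub δ Γ]
end

theorem Ty.subst_idSub : ∀ (A : Ty) (Γ : Ctx), A.subst (idSub Γ) = A
  | .obj, _ => rfl
  | .arr A u v, Γ => by
    rw [Ty.subst, Ty.subst_idSub A Γ, Tm.subst_idSub u Γ, Tm.subst_idSub v Γ]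

/-! ### Variables and substitution -/

mutual
theorem vars_lookup_subset_tm : ∀ (t : Tm) (σ : Sub) (x : ℕ), x ∈ t.vars →
    (lookupSub σ x).vars ⊆ (t.subst σ).vars
  | .var y, σ, x, hx => by
      simp [Tm.vars] at hx; subst hx; simp [Tm.subst]
  | .coh Θ A δ, σ, x, hx => by
      simp only [Tm.vars] at hx ⊢
      simp only [Tm.subst, Tm.vars]
      exact vars_lookup_subset_sub δ σ x hx
theorem vars_lookup_subset_sub : ∀ (δ σ : Sub) (x : ℕ), x ∈ Sub.vars δ →
    (lookupSub σ x).vars ⊆ Sub.vars (Sub.comp δ σ)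
  | [], _, _, hx => by simp [Sub.vars] at hx
  | (y, t) :: δ, σ, x, hx => by
      rw [Sub.vars] at hx
      rw [Sub.comp, Sub.vars]
      rcases Finset.mem_union.mp hx with h | h
      · exact (vars_lookup_subset_tm t σ x h).trans Finset.subset_union_left
      · exact (vars_lookup_subset_sub δ σ x h).trans Finset.subset_union_right
end

theorem vars_lookup_subset_ty : ∀ (A : Ty) (σ : Sub) (x : ℕ), x ∈ A.vars →
    (lookupSub σ x).vars ⊆ (A.subst σ).vars
  | .obj, _, _, hx => by simp [Ty.vars] at hx
  | .arr A u v, σ, x, hx => by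
      rw [Ty.vars] at hx
      rw [Ty.subst, Ty.vars]
      rcases Finset.mem_union.mp hx with h | h
      · rcases Finset.mem_union.mp h with h | h
        · exact (vars_lookup_subset_ty A σ x h).trans
            (Finset.subset_union_left.trans Finset.subset_union_left)
        · exact (vars_lookup_subset_tm u σ x h).trans
            (Finset.subset_union_right.trans Finset.subset_union_left)
      · exact (vars_lookup_subset_tm v σ x h).trans Finset.subset_union_right

mutual
theorem vars_subst_tm : ∀ (t : Tm) (σ : Sub),
    (t.subst σ).vars ⊆ t.vars.biUnion (fun x => (lookupSub σ x).vars)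
  | .var x, σ => by simp [Tm.subst, Tm.vars]
  | .coh Θ A δ, σ => by
      simp only [Tm.subst, Tm.vars]
      exact vars_subst_sub δ σ
theorem vars_subst_sub : ∀ (δ σ : Sub),
    Sub.vars (Sub.comp δ σ) ⊆ (Sub.vars δ).biUnion (fun x => (lookupSub σ x).vars)
  | [], σ => by simp [Sub.comp, Sub.vars]
  | (y, t) :: δ, σ => by
      rw [Sub.comp, Sub.vars, Sub.vars]
      intro z hz
      rcases Finset.mem_union.mp hz with h | h
      · have := vars_subst_tm t σ h
        rw [Finset.mem_biUnion] at this ⊢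
        obtain ⟨x, hx, hz⟩ := this
        exact ⟨x, Finset.mem_union_left _ hx, hz⟩
      · have := vars_subst_sub δ σ h
        rw [Finset.mem_biUnion] at this ⊢
        obtain ⟨x, hx, hz⟩ := this
        exact ⟨x, Finset.mem_union_right _ hx, hz⟩
end

theorem vars_subst_ty : ∀ (A : Ty) (σ : Sub),
    (A.subst σ).vars ⊆ A.vars.biUnion (fun x => (lookupSub σ x).vars)
  | .obj, σ => by simp [Ty.subst, Ty.vars]
  | .arr A u v, σ => by
      rw [Ty.subst, Ty.vars, Ty.vars]
      intro z hz
      rcases Finset.mem_union.mp hz with h | h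
      · rcases Finset.mem_union.mp h with h | h
        · have := vars_subst_ty A σ h
          rw [Finset.mem_biUnion] at this ⊢
          obtain ⟨x, hx, hz⟩ := this
          exact ⟨x, by simp [Finset.mem_union]; tauto, hz⟩
        · have := vars_subst_tm u σ h
          rw [Finset.mem_biUnion] at this ⊢
          obtain ⟨x, hx, hz⟩ := this
          exact ⟨x, by simp [Finset.mem_union]; tauto, hz⟩
      · have := vars_subst_tm v σ h
        rw [Finset.mem_biUnion] at this ⊢
        obtain ⟨x, hx, hz⟩ := this
        exact ⟨x, by simp [Finset.mem_union]; tauto, hz⟩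

/-! ### Substitution agreement and composition -/

mutual
theorem Tm.subst_cons {t : Tm} : ∀ (x : ℕ) (s : Tm) (σ : Sub), x ∉ t.vars →
    t.subst ((x, s) :: σ) = t.subst σ := by
  match t with
  | .var y =>
    intro x s σ hx
    simp [Tm.vars] at hx
    simp [Tm.subst, lookupSub, Ne.symm hx]
  | .coh Θ A δ =>
    intro x s σ hx
    simp only [Tm.vars] at hx
    simp only [Tm.subst]
    rw [Sub.comp_cons x s σ hx]
theorem Sub.comp_cons {δ : Sub} : ∀ (x : ℕ) (s : Tm) (σ : Sub), x ∉ Sub.vars δ →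
    Sub.comp δ ((x, s) :: σ) = Sub.comp δ σ := by
  match δ with
  | [] => intro x s σ _; rfl
  | (y, t) :: δ =>
    intro x s σ hx
    simp only [Sub.vars, Finset.mem_union, not_or] at hx
    simp only [Sub.comp]
    rw [Tm.subst_cons x s σ hx.1, Sub.comp_cons x s σ hx.2]
end

theorem Ty.subst_cons : ∀ {A : Ty} (x : ℕ) (s : Tm) (σ : Sub), x ∉ A.vars →
    A.subst ((x, s) :: σ) = A.subst σ
  | .obj, _, _, _, _ => rfl
  | .arr A u v, x, s, σ, hx => by
    simp only [Ty.vars, Finset.mem_union, not_or] at hx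
    rw [Ty.subst, Ty.subst, Ty.subst_cons x s σ hx.1.1,
      Tm.subst_cons x s σ hx.1.2, Tm.subst_cons x s σ hx.2]

def sKeys : Sub → Finset ℕ
  | [] => ∅
  | (x, _) :: γ => insert x (sKeys γ)

theorem lookupSub_comp : ∀ {τ : Sub} (σ : Sub) {x : ℕ}, x ∈ sKeys τ →
    lookupSub (Sub.comp τ σ) x = (lookupSub τ x).subst σ
  | [], σ, x, hx => by simp [sKeys] at hx
  | (y, t) :: τ, σ, x, hx => by
    by_cases hxy : x = y
    · subst hxy; simp [Sub.comp, lookupSub]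
    · simp only [sKeys, Finset.mem_insert] at hx
      simp only [Sub.comp, lookupSub, if_neg hxy]
      exact lookupSub_comp σ (hx.resolve_left hxy)

mutual
theorem Tm.subst_subst {t : Tm} : ∀ (τ σ : Sub), t.vars ⊆ sKeys τ →
    (t.subst τ).subst σ = t.subst (Sub.comp τ σ) := by
  match t with
  | .var x =>
    intro τ σ h
    simp only [Tm.vars] at h
    simp only [Tm.subst]
    exact (lookupSub_comp σ (h (Finset.mem_singleton_self x))).symm
  | .coh Θ A δ =>
    intro τ σ h
    simp only [Tm.vars] at h
    simp only [Tm.subst]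
    rw [Sub.comp_assoc τ σ h]
theorem Sub.comp_assoc {δ : Sub} : ∀ (τ σ : Sub), Sub.vars δ ⊆ sKeys τ →
    Sub.comp (Sub.comp δ τ) σ = Sub.comp δ (Sub.comp τ σ) := by
  match δ with
  | [] => intro τ σ _; rfl
  | (y, t) :: δ =>
    intro τ σ h
    simp only [Sub.vars] at h
    simp only [Sub.comp]
    rw [Tm.subst_subst τ σ (Finset.union_subset_iff.mp h).1,
      Sub.comp_assoc τ σ (Finset.union_subset_iff.mp h).2]
end

theorem Ty.subst_subst : ∀ {A : Ty} (τ σ : Sub), A.vars ⊆ sKeys τ →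
    (A.subst τ).subst σ = A.subst (Sub.comp τ σ)
  | .obj, _, _, _ => rfl
  | .arr A u v, τ, σ, h => by
    simp only [Ty.vars, Finset.union_subset_iff] at h
    simp only [Ty.subst]
    rw [Ty.subst_subst τ σ h.1.1, Tm.subst_subst τ σ h.1.2, Tm.subst_subst τ σ h.2]

/-! ### varDim -/

theorem varDim_cons {Γ : Ctx} {z x : ℕ} {A : Ty} (h : z ≠ x) :
    varDim ((x, A) :: Γ) z = varDim Γ z := by
  simp [varDim, lookupTy, h]

theorem varDim_head (Γ : Ctx) (x : ℕ) (A : Ty) : varDim ((x, A) :: Γ) x = A.dim + 1 := by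
  simp [varDim, lookupTy]

/-! ### Pasting contexts -/

def goodCtx (Γ : Ctx) : Prop :=
  ∀ z A u v, (z, Ty.arr A u v) ∈ Γ →
    ∃ a b, u = .var a ∧ v = .var b ∧ (a, A) ∈ Γ ∧ (b, A) ∈ Γ

theorem ps_var {Γ t B} (h : Ps Γ t B) :
    (∃ x, t = .var x ∧ (x, B) ∈ Γ) ∧ goodCtx Γ := by
  induction h with
  | base x =>
    refine ⟨⟨x, rfl, by simp⟩, ?_⟩
    intro z A u v hm
    simp at hm
  | @ext Γ x A y f hps hy hf hyf ih =>
    obtain ⟨⟨x, hx, hxA⟩, hg⟩ := ih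
    injection hx with hx
    subst hx
    refine ⟨⟨f, rfl, by simp⟩, ?_⟩
    intro z A' u v hm
    rcases List.mem_cons.mp hm with hm | hm
    · have h1 : z = f ∧ A'.arr u v = A.arr (.var x) (.var y) := by simpa using hm
      obtain ⟨rfl, h2⟩ := h1
      injection h2 with h2a h2b h2c
      subst h2a; subst h2b; subst h2c
      exact ⟨x, y, rfl, rfl, List.mem_cons_of_mem _ (List.mem_cons_of_mem _ hxA),
        List.mem_cons_of_mem _ List.mem_cons_self⟩
    rcases List.mem_cons.mp hm with hm | hm
    · have h1 : z = y ∧ A'.arr u v = A := by simpa using hm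
      obtain ⟨rfl, h2⟩ := h1
      have : (x, A'.arr u v) ∈ Γ := h2.symm ▸ hxA
      obtain ⟨a, b, hu, hv, ha, hb⟩ := hg x A' u v this
      exact ⟨a, b, hu, hv, List.mem_cons_of_mem _ (List.mem_cons_of_mem _ ha),
        List.mem_cons_of_mem _ (List.mem_cons_of_mem _ hb)⟩
    · obtain ⟨a, b, hu, hv, ha, hb⟩ := hg z A' u v hm
      exact ⟨a, b, hu, hv, List.mem_cons_of_mem _ (List.mem_cons_of_mem _ ha),
        List.mem_cons_of_mem _ (List.mem_cons_of_mem _ hb)⟩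
  | down hps ih =>
    obtain ⟨⟨x, hx, hxA⟩, hg⟩ := ih
    injection hx with hx
    subst hx
    obtain ⟨a, b, hu, hv, ha, hb⟩ := hg _ _ _ _ hxA
    exact ⟨⟨b, hv, hb⟩, hg⟩

theorem ps_lookup {Γ t B} (h : Ps Γ t B) : ∀ z C, (z, C) ∈ Γ → lookupTy Γ z = C := by
  induction h with
  | base x =>
    intro z C hm
    simp at hm
    obtain ⟨rfl, rfl⟩ := hm
    simp [lookupTy]
  | ext y f hps hy hf hyf ih =>
    intro z C hm
    rcases List.mem_cons.mp hm with hm | hm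
    · obtain ⟨rfl, rfl⟩ : z = f ∧ C = _ := by
        constructor <;> [exact (Prod.mk.injEq .. ▸ hm).1; exact (Prod.mk.injEq .. ▸ hm).2]
      simp [lookupTy]
    · have hzv : z ∈ ctxVars ((y, _) :: _) := mem_ctxVars_of_mem hm
      simp [ctxVars] at hzv
      have hzf : z ≠ f := by
        rintro rfl
        rcases hzv with h | h
        · exact hyf h.symm
        · exact hf h
      rcases List.mem_cons.mp hm with hm' | hm'
      · obtain ⟨rfl, rfl⟩ : z = y ∧ C = _ := by
          constructor <;> [exact (Prod.mk.injEq .. ▸ hm').1; exact (Prod.mk.injEq .. ▸ hm').2]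
        simp [lookupTy, hzf]
      · have hzy : z ≠ y := by
          rintro rfl
          exact hy (mem_ctxVars_of_mem hm')
        simp [lookupTy, hzf, hzy]
        exact ih z C hm'
  | down hps ih => exact ih

theorem bdry_vars_subset : ∀ (i : ℤ) (Γ : Ctx), ctxVars (bdry false i Γ) ⊆ ctxVars Γ
  | i, [] => by simp [bdry]
  | i, [p] => by simp [bdry]
  | i, (f, Af) :: (y, Ay) :: Γ => by
    rw [bdry]
    simp only [Bool.false_eq_true, if_false]
    split
    · exact (bdry_vars_subset i Γ).trans (by intro z hz; simp [ctxVars]; tauto)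
    · intro z hz
      simp [ctxVars] at hz ⊢
      rcases hz with h | h | h
      · tauto
      · tauto
      · have := bdry_vars_subset i Γ h; tauto

theorem ps_bdry_full {Γ t B} (h : Ps Γ t B) : ∀ i : ℤ, ctxDim Γ ≤ i → bdry false i Γ = Γ := by
  induction h with
  | base x => intro i hi; rw [bdry]
  | @ext Γ x A y f hps hy hf hyf ih =>
    intro i hi
    have hdim : ctxDim ((f, Ty.arr A (.var x) (.var y)) :: (y, A) :: Γ) =
        max (A.dim + 2) (max (A.dim + 1) (ctxDim Γ)) := by
      simp only [ctxDim, Ty.dim]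
      omega
    rw [hdim] at hi
    rw [bdry]
    simp only [Bool.false_eq_true, if_false]
    rw [if_neg (by omega), ih i (by omega)]
  | down hps ih => exact ih

theorem ctxDim_ps_cons (Γ : Ctx) (f y : ℕ) (A : Ty) (u v : Tm) :
    ctxDim ((f, A.arr u v) :: (y, A) :: Γ) =
      max (A.dim + 2) (max (A.dim + 1) (ctxDim Γ)) := by
  simp only [ctxDim, Ty.dim]
  omega

theorem ps_bdry_attain {Γ t B} (h : Ps Γ t B) :
    ∀ i : ℤ, 0 ≤ i → ∃ z ∈ ctxVars (bdry false i Γ), min i (ctxDim Γ - 1) ≤ varDim Γ z := by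
  induction h with
  | base x =>
    intro i hi
    refine ⟨x, by simp [bdry, ctxVars], ?_⟩
    have h1 : ctxDim [(x, Ty.obj)] = 0 := by simp [ctxDim, Ty.dim]
    have h2 : varDim [(x, Ty.obj)] x = 0 := by rw [varDim_head]; simp [Ty.dim]
    rw [h1, h2]
    omega
  | @ext Γ x A y f hps hy hf hyf ih =>
    intro i hi
    obtain ⟨⟨x', hx, hxA⟩, -⟩ := ps_var hps
    injection hx with hx
    subst hx
    have hAd : A.dim + 1 ≤ ctxDim Γ := varDim_le_ctxDim hxA
    have hdim := ctxDim_ps_cons Γ f y A (.var x) (.var y)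
    have lift : ∀ z ∈ ctxVars Γ,
        varDim ((f, A.arr (.var x) (.var y)) :: (y, A) :: Γ) z = varDim Γ z := by
      intro z hz
      rw [varDim_cons (by rintro rfl; exact hf hz), varDim_cons (by rintro rfl; exact hy hz)]
    by_cases hkeep : A.dim ≥ i - 1
    · have hb : bdry false i ((f, A.arr (.var x) (.var y)) :: (y, A) :: Γ) = bdry false i Γ := by
        rw [bdry]
        simp only [Bool.false_eq_true, if_false]
        rw [if_pos hkeep]
      rw [hb, hdim]
      by_cases hii : i ≤ ctxDim Γ - 1
      · obtain ⟨z, hz, hmin⟩ := ih i hi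
        have hzΓ : z ∈ ctxVars Γ := bdry_vars_subset i Γ hz
        refine ⟨z, hz, ?_⟩
        rw [lift z hzΓ]
        omega
      · have hfull : bdry false i Γ = Γ := ps_bdry_full hps i (by omega)
        refine ⟨x, by rw [hfull]; exact mem_ctxVars_of_mem hxA, ?_⟩
        rw [lift x (mem_ctxVars_of_mem hxA)]
        have hvx : varDim Γ x = A.dim + 1 := by
          unfold varDim; rw [ps_lookup hps x A hxA]
        rw [hvx]
        omega
    · have hb : bdry false i ((f, A.arr (.var x) (.var y)) :: (y, A) :: Γ) =
          (f, A.arr (.var x) (.var y)) :: (y, A) :: bdry false i Γ := by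
        rw [bdry]
        simp only [Bool.false_eq_true, if_false]
        rw [if_neg hkeep]
      rw [hb, hdim]
      by_cases hc : min i (max (A.dim + 2) (max (A.dim + 1) (ctxDim Γ)) - 1) ≤ A.dim + 2
      · refine ⟨f, by simp [ctxVars], ?_⟩
        rw [varDim_head]
        simp only [Ty.dim]
        omega
      · obtain ⟨z, hz, hmin⟩ := ih i hi
        have hzΓ : z ∈ ctxVars Γ := bdry_vars_subset i Γ hz
        refine ⟨z, by simp [ctxVars]; tauto, ?_⟩
        rw [lift z hzΓ]
        omega
  | down hps ih => exact ih

/-! ### Well-formedness: variables -/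

theorem lookupTy_of_ctxWf : ∀ {Γ x A}, CtxWf Γ → (x, A) ∈ Γ → lookupTy Γ x = A
  | _, x, A, .nil, h => by simp at h
  | _, x, A, @CtxWf.cons Γ B y hΓ hB hy, h => by
    rcases List.mem_cons.mp h with h1 | h1
    · obtain ⟨rfl, rfl⟩ : x = y ∧ A = B := by simpa using h1
      simp [lookupTy]
    · have hxy : x ≠ y := by
        rintro rfl
        exact hy (mem_ctxVars_of_mem h1)
      simp only [lookupTy, if_neg hxy]
      exact lookupTy_of_ctxWf hΓ h1


section WfVars

private def VM1 (Γ : Ctx) : Prop := ∀ y B, (y, B) ∈ Γ → Ty.vars B ⊆ ctxVars Γ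
private def VM2 (Γ : Ctx) (A : Ty) : Prop := Ty.vars A ⊆ ctxVars Γ
private def VM3 (Γ : Ctx) (t : Tm) (A : Ty) : Prop := Tm.vars t ∪ Ty.vars A ⊆ ctxVars Γ
private def VM4 (Γ : Ctx) (γ : Sub) (Δ : Ctx) : Prop :=
  Sub.vars γ ⊆ ctxVars Γ ∧ ∀ x ∈ ctxVars Δ, (lookupSub γ x).vars ⊆ Sub.vars γ

private theorem vc1 : VM1 [] := by intro y B hm; simp at hm
private theorem vc2 : ∀ (Γ : Ctx) (A : Ty) (x : ℕ), TyWf Γ A → x ∉ ctxVars Γ →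
    VM1 Γ → VM2 Γ A → VM1 ((x, A) :: Γ) := by
  intro Γ A x hA hx ih1 ih2 y B hm
  rcases List.mem_cons.mp hm with h1 | h1
  · obtain ⟨rfl, rfl⟩ : y = x ∧ B = A := by simpa using h1
    exact ih2.trans (by intro a ha; simp [ctxVars]; exact .inr ha)
  · exact (ih1 y B h1).trans (by intro a ha; simp [ctxVars]; exact .inr ha)
private theorem vc3 : ∀ Γ : Ctx, VM2 Γ .obj := by
  intro Γ; unfold VM2 Ty.vars; simp
private theorem vc4 : ∀ (Γ : Ctx) (A : Ty) (u v : Tm),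
    VM3 Γ u A → VM3 Γ v A → VM2 Γ (.arr A u v) := by
  intro Γ A u v ihu ihv
  unfold VM2 Ty.vars VM3 at *
  refine Finset.union_subset (Finset.union_subset ?_ ?_) ?_
  · exact Finset.subset_union_right.trans ihu
  · exact Finset.subset_union_left.trans ihu
  · exact Finset.subset_union_left.trans ihv
private theorem vc5 : ∀ (Γ : Ctx) (x : ℕ) (A : Ty), (x, A) ∈ Γ →
    VM1 Γ → VM3 Γ (.var x) A := by
  intro Γ x A hm ih
  apply Finset.union_subset
  · simp only [Tm.vars, Finset.singleton_subset_iff]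
    exact mem_ctxVars_of_mem hm
  · exact ih x A hm
private theorem vc6 : ∀ (Γ Δ : Ctx) (A : Ty) (γ : Sub),
    VM2 Δ A → VM4 Γ γ Δ → VM3 Γ (.coh Δ A γ) (A.subst γ) := by
  intro Γ Δ A γ ihA ihσ
  apply Finset.union_subset
  · simp only [Tm.vars]
    exact ihσ.1
  · refine (vars_subst_ty _ _).trans (Finset.biUnion_subset.mpr ?_)
    intro x hx
    exact (ihσ.2 x (ihA hx)).trans ihσ.1
private theorem vc7 : ∀ Γ : Ctx, VM4 Γ [] [] := by
  intro Γ; exact ⟨by simp [Sub.vars], by simp [ctxVars]⟩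
private theorem vc8 : ∀ (Γ : Ctx) (γ : Sub) (Δ : Ctx) (x : ℕ) (A : Ty) (t : Tm),
    x ∉ ctxVars Δ → VM4 Γ γ Δ → VM3 Γ t (A.subst γ) →
    VM4 Γ ((x, t) :: γ) ((x, A) :: Δ) := by
  intro Γ γ Δ x A t hx ihσ iht
  constructor
  · rw [Sub.vars]
    exact Finset.union_subset (Finset.subset_union_left.trans iht) ihσ.1
  · intro z hz
    rw [Sub.vars]
    by_cases hzx : z = x
    · subst hzx
      simp only [lookupSub, if_pos rfl]
      exact Finset.subset_union_left
    · simp only [lookupSub, if_neg hzx]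
      simp [ctxVars] at hz
      exact (ihσ.2 z (by tauto)).trans Finset.subset_union_right

theorem ctxWf_entry_vars' {Γ} (h : CtxWf Γ) : VM1 Γ :=
  @CtxWf.rec (fun Γ _ => VM1 Γ) (fun Γ A _ => VM2 Γ A) (fun Γ t A _ => VM3 Γ t A)
    (fun Γ γ Δ _ => VM4 Γ γ Δ) vc1
    (fun _ h2 h3 ih1 ih2 => vc2 _ _ _ h2 h3 ih1 ih2)
    (fun _ _ => vc3 _) (fun _ _ ih1 ih2 => vc4 _ _ _ _ ih1 ih2)
    (fun _ h2 ih => vc5 _ _ _ h2 ih) (fun _ _ _ _ ihA ihσ => vc6 _ _ _ _ ihA ihσ)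
    (fun _ _ => vc7 _) (fun _ _ h3 _ ihσ _ iht => vc8 _ _ _ _ _ _ h3 ihσ iht) Γ h
theorem tyWf_vars {Γ A} (h : TyWf Γ A) : Ty.vars A ⊆ ctxVars Γ :=
  @TyWf.rec (fun Γ _ => VM1 Γ) (fun Γ A _ => VM2 Γ A) (fun Γ t A _ => VM3 Γ t A)
    (fun Γ γ Δ _ => VM4 Γ γ Δ) vc1
    (fun _ h2 h3 ih1 ih2 => vc2 _ _ _ h2 h3 ih1 ih2)
    (fun _ _ => vc3 _) (fun _ _ ih1 ih2 => vc4 _ _ _ _ ih1 ih2)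
    (fun _ h2 ih => vc5 _ _ _ h2 ih) (fun _ _ _ _ ihA ihσ => vc6 _ _ _ _ ihA ihσ)
    (fun _ _ => vc7 _) (fun _ _ h3 _ ihσ _ iht => vc8 _ _ _ _ _ _ h3 ihσ iht) Γ A h
theorem tmWf_vars {Γ t A} (h : TmWf Γ t A) : Tm.vars t ∪ Ty.vars A ⊆ ctxVars Γ :=
  @TmWf.rec (fun Γ _ => VM1 Γ) (fun Γ A _ => VM2 Γ A) (fun Γ t A _ => VM3 Γ t A)
    (fun Γ γ Δ _ => VM4 Γ γ Δ) vc1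
    (fun _ h2 h3 ih1 ih2 => vc2 _ _ _ h2 h3 ih1 ih2)
    (fun _ _ => vc3 _) (fun _ _ ih1 ih2 => vc4 _ _ _ _ ih1 ih2)
    (fun _ h2 ih => vc5 _ _ _ h2 ih) (fun _ _ _ _ ihA ihσ => vc6 _ _ _ _ ihA ihσ)
    (fun _ _ => vc7 _) (fun _ _ h3 _ ihσ _ iht => vc8 _ _ _ _ _ _ h3 ihσ iht) Γ t A h
theorem subWf_vars_all {Γ γ Δ} (h : SubWf Γ γ Δ) : VM4 Γ γ Δ :=
  @SubWf.rec (fun Γ _ => VM1 Γ) (fun Γ A _ => VM2 Γ A) (fun Γ t A _ => VM3 Γ t A)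
    (fun Γ γ Δ _ => VM4 Γ γ Δ) vc1
    (fun _ h2 h3 ih1 ih2 => vc2 _ _ _ h2 h3 ih1 ih2)
    (fun _ _ => vc3 _) (fun _ _ ih1 ih2 => vc4 _ _ _ _ ih1 ih2)
    (fun _ h2 ih => vc5 _ _ _ h2 ih) (fun _ _ _ _ ihA ihσ => vc6 _ _ _ _ ihA ihσ)
    (fun _ _ => vc7 _) (fun _ _ h3 _ ihσ _ iht => vc8 _ _ _ _ _ _ h3 ihσ iht) Γ γ Δ h

theorem ctxWf_entry_vars {Γ} (h : CtxWf Γ) {y B} (hm : (y, B) ∈ Γ) :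
    Ty.vars B ⊆ ctxVars Γ := ctxWf_entry_vars' h y B hm
theorem subWf_vars {Γ γ Δ} (h : SubWf Γ γ Δ) : Sub.vars γ ⊆ ctxVars Γ :=
  (subWf_vars_all h).1
theorem subWf_lookup_vars {Γ γ Δ} (h : SubWf Γ γ Δ) {x} (hx : x ∈ ctxVars Δ) :
    (lookupSub γ x).vars ⊆ Sub.vars γ := (subWf_vars_all h).2 x hx

end WfVars

theorem subWf_keys : ∀ {Γ γ Δ}, SubWf Γ γ Δ → sKeys γ = ctxVars Δ
  | _, _, _, .nil _ => rfl
  | _, _, _, .cons hσ _ _ _ => by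
    rw [sKeys, ctxVars, subWf_keys hσ]

theorem subWf_lookup : ∀ {Γ σ Δ}, SubWf Γ σ Δ → ∀ {y B}, (y, B) ∈ Δ →
    TmWf Γ (lookupSub σ y) (B.subst σ)
  | _, _, _, .nil _, y, B, h => by simp at h
  | _, _, _, @SubWf.cons Γ γ Δ x A t hσ hA hx ht, y, B, h => by
    rcases List.mem_cons.mp h with h1 | h1
    · obtain ⟨rfl, rfl⟩ : y = x ∧ B = A := by simpa using h1
      simp only [lookupSub, if_pos rfl]
      rwa [Ty.subst_cons y t γ (fun hc => hx (tyWf_vars hA hc))]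
    · have hyx : y ≠ x := by
        rintro rfl
        exact hx (mem_ctxVars_of_mem h1)
      simp only [lookupSub, if_neg hyx]
      rw [Ty.subst_cons x t γ
        (fun hc => hx (ctxWf_entry_vars (ctxWf_of_subWf hσ).2 h1 hc))]
      exact subWf_lookup hσ h1

theorem subWf_lookup' {Γ σ Δ} (hσ : SubWf Γ σ Δ) {x} (hx : x ∈ ctxVars Δ) :
    TmWf Γ (lookupSub σ x) ((lookupTy Δ x).subst σ) :=
  subWf_lookup hσ (lookupTy_mem hx)

section MaxDim

private def DM1 (Γ : Ctx) : Prop :=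
  ∀ y B, (y, B) ∈ Γ → ∀ z ∈ Ty.vars B, varDim Γ z ≤ B.dim
private def DM2 (Γ : Ctx) (A : Ty) : Prop := ∀ z ∈ Ty.vars A, varDim Γ z ≤ A.dim
private def DM3 (Γ : Ctx) (t : Tm) (A : Ty) : Prop :=
  ∀ z ∈ Tm.vars t ∪ Ty.vars A, varDim Γ z ≤ A.dim + 1
private def DM4 (Γ : Ctx) (γ : Sub) (Δ : Ctx) : Prop :=
  ∀ z ∈ Sub.vars γ, varDim Γ z ≤ ctxDim Δ

private theorem dc1 : DM1 [] := by intro y B hm; simp at hm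
private theorem dc2 : ∀ (Γ : Ctx) (A : Ty) (x : ℕ), CtxWf Γ → TyWf Γ A → x ∉ ctxVars Γ →
    DM1 Γ → DM2 Γ A → DM1 ((x, A) :: Γ) := by
  intro Γ A x hΓ hA hx ih1 ih2 y B hm z hz
  rcases List.mem_cons.mp hm with h1 | h1
  · obtain ⟨rfl, rfl⟩ : y = x ∧ B = A := by simpa using h1
    have hzΓ : z ∈ ctxVars Γ := tyWf_vars hA hz
    rw [varDim_cons (by rintro rfl; exact hx hzΓ)]
    exact ih2 z hz
  · have hzΓ : z ∈ ctxVars Γ := ctxWf_entry_vars hΓ h1 hz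
    rw [varDim_cons (by rintro rfl; exact hx hzΓ)]
    exact ih1 y B h1 z hz
private theorem dc3 : ∀ Γ : Ctx, DM2 Γ .obj := by
  intro Γ z hz; simp [Ty.vars] at hz
private theorem dc4 : ∀ (Γ : Ctx) (A : Ty) (u v : Tm),
    DM3 Γ u A → DM3 Γ v A → DM2 Γ (.arr A u v) := by
  intro Γ A u v ihu ihv z hz
  rw [Ty.vars] at hz
  show varDim Γ z ≤ A.dim + 1
  rcases Finset.mem_union.mp hz with h | h
  · rcases Finset.mem_union.mp h with h | h
    · exact ihu z (Finset.mem_union_right _ h)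
    · exact ihu z (Finset.mem_union_left _ h)
  · exact ihv z (Finset.mem_union_left _ h)
private theorem dc5 : ∀ (Γ : Ctx) (x : ℕ) (A : Ty), CtxWf Γ → (x, A) ∈ Γ →
    DM1 Γ → DM3 Γ (.var x) A := by
  intro Γ x A hΓ hm ih z hz
  rcases Finset.mem_union.mp hz with h | h
  · simp [Tm.vars] at h
    subst h
    unfold varDim
    rw [lookupTy_of_ctxWf hΓ hm]
  · have := ih x A hm z h
    omega
private theorem dc6 : ∀ (Γ Δ : Ctx) (A : Ty) (γ : Sub), PsCtx Δ → TyWf Δ A →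
    isFull Δ A → SubWf Γ γ Δ → DM2 Δ A → DM4 Γ γ Δ → DM3 Γ (.coh Δ A γ) (A.subst γ) := by
  intro Γ Δ A γ hps hA hfull hσ ihA ihσ z hz
  have hzγ : z ∈ Sub.vars γ := by
    rcases Finset.mem_union.mp hz with h | h
    · simpa only [Tm.vars] using h
    · obtain ⟨x, hx, hz'⟩ := Finset.mem_biUnion.mp (vars_subst_ty A γ h)
      exact subWf_lookup_vars hσ (tyWf_vars hA hx) hz'
  have h1 : varDim Γ z ≤ ctxDim Δ := ihσ z hzγ
  obtain ⟨x0, hps'⟩ := hps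
  have hΔne : Δ ≠ [] := by
    obtain ⟨⟨w, hw, hwm⟩, -⟩ := ps_var hps'
    intro hnil
    subst hnil
    simp at hwm
  have h2 : ctxDim Δ ≤ A.dim + 1 := by
    obtain ⟨B, u, v, rfl, hcase⟩ := hfull
    have hBd := B.dim_ge
    rcases hcase with ⟨hsrc, -⟩ | ⟨hall, -⟩
    · by_cases h0 : ctxDim Δ ≤ B.dim + 2
      · simp only [Ty.dim]
        omega
      · exfalso
        obtain ⟨w, hw, hmin⟩ := ps_bdry_attain hps' (ctxDim Δ - 1) (by omega)
        have hw' : w ∈ Ty.vars (Ty.arr B u v) := by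
          have hmem : w ∈ ctxVars (srcCtx Δ) := hw
          rw [hsrc] at hmem
          rw [Ty.vars]
          rcases Finset.mem_union.mp hmem with h | h
          · exact Finset.mem_union_left _ (Finset.mem_union_right _ h)
          · exact Finset.mem_union_left _ (Finset.mem_union_left _ h)
        have hvd := ihA w hw'
        simp only [Ty.dim] at hvd
        omega
    · obtain ⟨x1, A1, hm1, hd1⟩ := ctxDim_attained hΔne
      have hx1v : x1 ∈ ctxVars Δ := mem_ctxVars_of_mem hm1
      have hvd1 : varDim Δ x1 = A1.dim + 1 := by
        unfold varDim
        rw [ps_lookup hps' x1 A1 hm1]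
      have hx1A : x1 ∈ Ty.vars (Ty.arr B u v) := by
        rw [hall] at hx1v
        rw [Ty.vars]
        rcases Finset.mem_union.mp hx1v with h | h
        · exact Finset.mem_union_left _ (Finset.mem_union_right _ h)
        · exact Finset.mem_union_left _ (Finset.mem_union_left _ h)
      have hvd := ihA x1 hx1A
      simp only [Ty.dim] at hvd ⊢
      omega
  rw [Ty.dim_subst]
  omega
private theorem dc7 : ∀ Γ : Ctx, DM4 Γ [] [] := by
  intro Γ z hz; simp [Sub.vars] at hz
private theorem dc8 : ∀ (Γ : Ctx) (γ : Sub) (Δ : Ctx) (x : ℕ) (A : Ty) (t : Tm),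
    DM4 Γ γ Δ → DM3 Γ t (A.subst γ) → DM4 Γ ((x, t) :: γ) ((x, A) :: Δ) := by
  intro Γ γ Δ x A t ihσ iht z hz
  rw [Sub.vars] at hz
  have hcd : ctxDim ((x, A) :: Δ) = max (A.dim + 1) (ctxDim Δ) := rfl
  rcases Finset.mem_union.mp hz with h | h
  · have := iht z (Finset.mem_union_left _ h)
    rw [Ty.dim_subst] at this
    omega
  · have := ihσ z h
    omega

theorem maxdim_ty {Γ A} (h : TyWf Γ A) : DM2 Γ A :=
  @TyWf.rec (fun Γ _ => DM1 Γ) (fun Γ A _ => DM2 Γ A) (fun Γ t A _ => DM3 Γ t A)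
    (fun Γ γ Δ _ => DM4 Γ γ Δ) dc1
    (fun h1 h2 h3 ih1 ih2 => dc2 _ _ _ h1 h2 h3 ih1 ih2)
    (fun _ _ => dc3 _) (fun _ _ ih1 ih2 => dc4 _ _ _ _ ih1 ih2)
    (fun h1 h2 ih => dc5 _ _ _ h1 h2 ih)
    (fun h1 h2 h3 h4 ihA ihσ => dc6 _ _ _ _ h1 h2 h3 h4 ihA ihσ)
    (fun _ _ => dc7 _) (fun _ _ _ _ ihσ _ iht => dc8 _ _ _ _ _ _ ihσ iht) Γ A h

theorem maxdim_tm {Γ t A} (h : TmWf Γ t A) : ∀ z ∈ Tm.vars t ∪ Ty.vars A,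
    varDim Γ z ≤ A.dim + 1 :=
  @TmWf.rec (fun Γ _ => DM1 Γ) (fun Γ A _ => DM2 Γ A) (fun Γ t A _ => DM3 Γ t A)
    (fun Γ γ Δ _ => DM4 Γ γ Δ) dc1
    (fun h1 h2 h3 ih1 ih2 => dc2 _ _ _ h1 h2 h3 ih1 ih2)
    (fun _ _ => dc3 _) (fun _ _ ih1 ih2 => dc4 _ _ _ _ ih1 ih2)
    (fun h1 h2 ih => dc5 _ _ _ h1 h2 ih)
    (fun h1 h2 h3 h4 ihA ihσ => dc6 _ _ _ _ h1 h2 h3 h4 ihA ihσ)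
    (fun _ _ => dc7 _) (fun _ _ _ _ ihσ _ iht => dc8 _ _ _ _ _ _ ihσ iht) Γ t A h

end MaxDim

theorem meets_of_ty_meets {Γ X} (hX : upClosed Γ X) {s C} (h : TmWf Γ s C)
    (hne : (Ty.vars C ∩ X).Nonempty) : (Tm.vars s ∩ X).Nonempty := by
  cases h with
  | var hΓ hm =>
    obtain ⟨w, hw⟩ := hne
    obtain ⟨hw1, hw2⟩ := Finset.mem_inter.mp hw
    refine ⟨_, Finset.mem_inter.mpr ⟨?_, hX.2 _ _ hm w hw2 hw1⟩⟩
    simp [Tm.vars]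
  | coh hps hA hfull hσ' =>
    obtain ⟨w, hw⟩ := hne
    obtain ⟨hw1, hw2⟩ := Finset.mem_inter.mp hw
    obtain ⟨x, hx, hw'⟩ := Finset.mem_biUnion.mp (vars_subst_ty _ _ hw1)
    have hwγ := subWf_lookup_vars hσ' (tyWf_vars hA hx) hw'
    exact ⟨w, Finset.mem_inter.mpr ⟨by simpa only [Tm.vars] using hwγ, hw2⟩⟩
/-- **Lemma (preimage bounds).** For a valid substitution `Γ ⊢ σ : Δ` and an
up-closed `X ∈ U(Γ)`: the preimage `σ⁻¹X` is up-closed in `Δ`, and depths with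
respect to `σ⁻¹X` are bounded by depths of substituted objects w.r.t. `X`. -/
theorem preimage_upClosed_and_depth_bounds
    (Γ : Ctx) (σ : Sub) (Δ : Ctx) (X : Finset ℕ)
    (hσ : SubWf Γ σ Δ) (hX : upClosed Γ X) :
    upClosed Δ (preimage σ Δ X) ∧
    (∀ (t : Tm) (A : Ty), TmWf Δ t A →
      depthTm Δ (preimage σ Δ X) t A ≤
        depthTm Γ X (Tm.subst t σ) (Ty.subst A σ)) ∧
    (∀ (τ : Sub) (Θ : Ctx), SubWf Δ τ Θ →
      depthSub Δ (preimage σ Δ X) τ Θ ≤ depthSub Γ X (Sub.comp τ σ) Θ) ∧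
    depthCtx Δ (preimage σ Δ X) ≤ depthSub Γ X σ Δ := by
  have hCtxΔ : CtxWf Δ := (ctxWf_of_subWf hσ).2
  have hYmem : ∀ x, x ∈ preimage σ Δ X ↔
      x ∈ ctxVars Δ ∧ ((lookupSub σ x).vars ∩ X).Nonempty := by
    intro x
    rw [preimage, Finset.mem_filter]
    simp only [Tm.subst]
  have key : ∀ (t : Tm) (A : Ty), TmWf Δ t A →
      depthTm Δ (preimage σ Δ X) t A ≤
        depthTm Γ X (Tm.subst t σ) (Ty.subst A σ) := by
    intro t A ht
    unfold depthTm
    apply fmax_le_fmax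
    · intro a ha
      obtain ⟨x, hx, rfl⟩ := Finset.mem_image.mp ha
      obtain ⟨hx1, hx2⟩ := Finset.mem_inter.mp hx
      obtain ⟨hxΔ, z, hz⟩ : x ∈ ctxVars Δ ∧
          ∃ z, z ∈ (lookupSub σ x).vars ∩ X := by
        have h := (hYmem x).mp hx2
        exact ⟨h.1, h.2⟩
      obtain ⟨hz1, hz2⟩ := Finset.mem_inter.mp hz
      refine ⟨((Ty.subst A σ).dim + 1) - varDim Γ z,
        Finset.mem_image_of_mem _ (Finset.mem_inter.mpr ⟨?_, hz2⟩), ?_⟩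
      · rcases Finset.mem_union.mp hx1 with h | h
        · exact Finset.mem_union_left _ (vars_lookup_subset_tm t σ x h hz1)
        · exact Finset.mem_union_right _ (vars_lookup_subset_ty A σ x h hz1)
      · rw [Ty.dim_subst]
        have h1 : varDim Γ z ≤ ((lookupTy Δ x).subst σ).dim + 1 :=
          maxdim_tm (subWf_lookup' hσ hxΔ) z (Finset.mem_union_left _ hz1)
        rw [Ty.dim_subst] at h1
        have h2 : varDim Δ x = (lookupTy Δ x).dim + 1 := rfl
        omega
    · rintro ⟨b, hb⟩
      obtain ⟨z, hz, rfl⟩ := Finset.mem_image.mp hb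
      obtain ⟨hz1, hz2⟩ := Finset.mem_inter.mp hz
      have hex : ∃ x ∈ Tm.vars t ∪ Ty.vars A, z ∈ (lookupSub σ x).vars := by
        rcases Finset.mem_union.mp hz1 with h | h
        · obtain ⟨x, hx, hzx⟩ := Finset.mem_biUnion.mp (vars_subst_tm t σ h)
          exact ⟨x, Finset.mem_union_left _ hx, hzx⟩
        · obtain ⟨x, hx, hzx⟩ := Finset.mem_biUnion.mp (vars_subst_ty A σ h)
          exact ⟨x, Finset.mem_union_right _ hx, hzx⟩
      obtain ⟨x, hx, hzx⟩ := hex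
      have hxΔ : x ∈ ctxVars Δ := tmWf_vars ht hx
      have hxY : x ∈ preimage σ Δ X :=
        (hYmem x).mpr ⟨hxΔ, ⟨z, Finset.mem_inter.mpr ⟨hzx, hz2⟩⟩⟩
      exact ⟨_, Finset.mem_image_of_mem _ (Finset.mem_inter.mpr ⟨hx, hxY⟩)⟩
  refine ⟨⟨fun x hx => ((hYmem x).mp hx).1, ?_⟩, key, ?_, ?_⟩
  · intro y B hm x hxY hxB
    obtain ⟨-, z, hz⟩ : x ∈ ctxVars Δ ∧ ∃ z, z ∈ (lookupSub σ x).vars ∩ X := by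
      have h := (hYmem x).mp hxY
      exact ⟨h.1, h.2⟩
    obtain ⟨hz1, hz2⟩ := Finset.mem_inter.mp hz
    have hzB : z ∈ (Ty.subst B σ).vars := vars_lookup_subset_ty B σ x hxB hz1
    have hne : ((lookupSub σ y).vars ∩ X).Nonempty :=
      meets_of_ty_meets hX (subWf_lookup hσ hm)
        ⟨z, Finset.mem_inter.mpr ⟨hzB, hz2⟩⟩
    exact (hYmem y).mpr ⟨mem_ctxVars_of_mem hm, hne⟩
  · intro τ Θ hτ
    have hΘwf : CtxWf Θ := (ctxWf_of_subWf hτ).2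
    unfold depthSub
    apply fmax_image_mono
    intro x hx
    have e1 : Tm.subst (Tm.subst (.var x) τ) σ = Tm.subst (.var x) (Sub.comp τ σ) := by
      apply Tm.subst_subst
      simp only [Tm.vars, Finset.singleton_subset_iff, subWf_keys hτ]
      exact hx
    have e2 : Ty.subst (Ty.subst (lookupTy Θ x) τ) σ =
        Ty.subst (lookupTy Θ x) (Sub.comp τ σ) := by
      apply Ty.subst_subst
      rw [subWf_keys hτ]
      exact ctxWf_entry_vars hΘwf (lookupTy_mem hx)
    have hwf : TmWf Δ (Tm.subst (.var x) τ) (Ty.subst (lookupTy Θ x) τ) := by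
      have h := subWf_lookup' hτ hx
      simpa only [Tm.subst] using h
    have h := key _ _ hwf
    rwa [e1, e2] at h
  · unfold depthCtx depthSub
    apply fmax_image_mono
    intro x hx
    have e1 : Tm.subst (.var x) (idSub Δ) = .var x := by
      simp only [Tm.subst, lookupSub_idSub]
    have e2 : Ty.subst (lookupTy Δ x) (idSub Δ) = lookupTy Δ x := Ty.subst_idSub _ _
    rw [e1, e2]
    exact key (.var x) (lookupTy Δ x) (.var hCtxΔ (lookupTy_mem hx))

end Catt
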